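/- Let f, g : Ω → [0,1] be measurable with g ≤ f pointwise, let Ψ : Ω → ℝ be square-integrable, and set p_K = E[f], p_∞ = E[g], assuming p_∞ > 0. Then |E[Ψ g]/p_∞ − E[Ψ f]/p_K| ≤ √(E[Ψ²]) · ( (p_K − p_∞)/(p_K √p_∞) + √(p_K − p_∞)/p_K ). -/

import Mathlib

open MeasureTheory ProbabilityTheory Real

lemma aux_memL2 {Ω : Type*} [MeasureSpace Ω] [IsProbabilityMeasure (ℙ : Measure Ω)]
    (h : Ω → ℝ) (hm : Measurable h) (h0 : ∀ ω, 0 ≤ h ω) (h1 : ∀ ω, h ω ≤ 1) :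
    MemLp h 2 (ℙ : Measure Ω) := by
  refine (memLp_top_of_bound hm.aestronglyMeasurable 1 (ae_of_all _ fun ω => ?_)).mono_exponent le_top
  rw [Real.norm_eq_abs, abs_le]
  exact ⟨by linarith [h0 ω], h1 ω⟩

lemma aux_cs {Ω : Type*} [MeasureSpace Ω] [IsProbabilityMeasure (ℙ : Measure Ω)]
    (Ψ h : Ω → ℝ) (hm : Measurable h) (hΨL2 : MemLp Ψ 2 (ℙ : Measure Ω))
    (h0 : ∀ ω, 0 ≤ h ω) (h1 : ∀ ω, h ω ≤ 1) :
    |∫ ω, Ψ ω * h ω| ≤ Real.sqrt (∫ ω, (Ψ ω) ^ 2) * Real.sqrt (∫ ω, h ω) := by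
  have hhL2 : MemLp h 2 (ℙ : Measure Ω) := aux_memL2 h hm h0 h1
  have hΨint : Integrable Ψ := hΨL2.integrable one_le_two
  have hhint : Integrable h := hhL2.integrable one_le_two
  have hh2int : Integrable (fun ω => h ω ^ 2) := hhL2.integrable_sq
  have habs : |∫ ω, Ψ ω * h ω| ≤ ∫ ω, |Ψ ω| * h ω := by
    rw [← Real.norm_eq_abs]
    calc ‖∫ ω, Ψ ω * h ω‖ ≤ ∫ ω, ‖Ψ ω * h ω‖ := norm_integral_le_integral_norm _
    _ = ∫ ω, |Ψ ω| * h ω := by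
        refine integral_congr_ae (ae_of_all _ fun ω => ?_)
        simp only [Real.norm_eq_abs, abs_mul, abs_of_nonneg (h0 ω)]
  have hholder : ∫ ω, |Ψ ω| * h ω ≤
      (∫ ω, |Ψ ω| ^ (2:ℝ)) ^ ((1:ℝ)/2) * (∫ ω, h ω ^ (2:ℝ)) ^ ((1:ℝ)/2) := by
    refine integral_mul_le_Lp_mul_Lq_of_nonneg Real.HolderConjugate.two_two
      (ae_of_all _ fun ω => abs_nonneg _) (ae_of_all _ h0) ?_ ?_
    · simpa [ENNReal.ofReal_ofNat, Pi.abs_def] using hΨL2.abs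
    · simpa [ENNReal.ofReal_ofNat] using hhL2
  have hpow1 : (∫ ω, |Ψ ω| ^ (2:ℝ)) = ∫ ω, (Ψ ω) ^ 2 := by
    refine integral_congr_ae (ae_of_all _ fun ω => ?_)
    simp only [Real.rpow_two, sq_abs]
  have hpow2 : (∫ ω, h ω ^ (2:ℝ)) = ∫ ω, h ω ^ 2 := by
    refine integral_congr_ae (ae_of_all _ fun ω => ?_)
    simp only [Real.rpow_two]
  have hsq : (∫ ω, h ω ^ 2) ≤ ∫ ω, h ω := by
    refine integral_mono hh2int hhint fun ω => ?_
    nlinarith [h0 ω, h1 ω]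
  calc |∫ ω, Ψ ω * h ω| ≤ ∫ ω, |Ψ ω| * h ω := habs
    _ ≤ (∫ ω, |Ψ ω| ^ (2:ℝ)) ^ ((1:ℝ)/2) * (∫ ω, h ω ^ (2:ℝ)) ^ ((1:ℝ)/2) := hholder
    _ = Real.sqrt (∫ ω, (Ψ ω) ^ 2) * Real.sqrt (∫ ω, h ω ^ 2) := by
        rw [hpow1, hpow2, Real.sqrt_eq_rpow, Real.sqrt_eq_rpow]
    _ ≤ Real.sqrt (∫ ω, (Ψ ω) ^ 2) * Real.sqrt (∫ ω, h ω) := by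
        exact mul_le_mul_of_nonneg_left (Real.sqrt_le_sqrt hsq) (Real.sqrt_nonneg _)

/-- **Abstract truncation error bound (Proposition `controlerreur`, part a).**
If `0 ≤ g ≤ f ≤ 1`, `Ψ` is square integrable, `p_K = E[f]`, `p_∞ = E[g] > 0`, then
`|E[Ψ g]/p_∞ − E[Ψ f]/p_K| ≤ √(E[Ψ²]) ((p_K − p_∞)/(p_K √p_∞) + √(p_K − p_∞)/p_K)`. -/
theorem stmt_3 {Ω : Type*} [MeasureSpace Ω] [IsProbabilityMeasure (ℙ : Measure Ω)]
    (f g Ψ : Ω → ℝ) (hf : Measurable f) (hg : Measurable g)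
    (hΨmeas : Measurable Ψ) (hΨL2 : MemLp Ψ 2 (ℙ : Measure Ω))
    (h0g : ∀ ω, 0 ≤ g ω) (hgf : ∀ ω, g ω ≤ f ω) (hf1 : ∀ ω, f ω ≤ 1)
    (hpinf : 0 < ∫ ω, g ω) :
    |(∫ ω, Ψ ω * g ω) / (∫ ω, g ω) - (∫ ω, Ψ ω * f ω) / (∫ ω, f ω)| ≤
      Real.sqrt (∫ ω, (Ψ ω) ^ 2) *
        (((∫ ω, f ω) - (∫ ω, g ω)) / ((∫ ω, f ω) * Real.sqrt (∫ ω, g ω))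
          + Real.sqrt ((∫ ω, f ω) - (∫ ω, g ω)) / (∫ ω, f ω)) := by
  have h0f : ∀ ω, 0 ≤ f ω := fun ω => le_trans (h0g ω) (hgf ω)
  have hg1 : ∀ ω, g ω ≤ 1 := fun ω => le_trans (hgf ω) (hf1 ω)
  set pK := ∫ ω, f ω with hpK
  set pinf := ∫ ω, g ω with hpinfdef
  have hΨint : Integrable Ψ := hΨL2.integrable one_le_two
  have hfint : Integrable f := (aux_memL2 f hf h0f hf1).integrable one_le_two
  have hgint : Integrable g := (aux_memL2 g hg h0g hg1).integrable one_le_two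
  have hpKpos : 0 < pK := lt_of_lt_of_le hpinf (integral_mono hgint hfint hgf)
  have hple : pinf ≤ pK := integral_mono hgint hfint hgf
  have hΨf : Integrable (fun ω => Ψ ω * f ω) :=
    (hΨint.bdd_mul hf.aestronglyMeasurable (c := 1) (ae_of_all _ fun ω => by
      rw [Real.norm_eq_abs, abs_le]; exact ⟨by linarith [h0f ω], hf1 ω⟩)).congr
      (ae_of_all _ fun ω => mul_comm _ _)
  have hΨg : Integrable (fun ω => Ψ ω * g ω) :=
    (hΨint.bdd_mul hg.aestronglyMeasurable (c := 1) (ae_of_all _ fun ω => by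
      rw [Real.norm_eq_abs, abs_le]; exact ⟨by linarith [h0g ω], hg1 ω⟩)).congr
      (ae_of_all _ fun ω => mul_comm _ _)
  set A := ∫ ω, Ψ ω * g ω with hA
  set B := ∫ ω, Ψ ω * f ω with hB
  set S := Real.sqrt (∫ ω, (Ψ ω) ^ 2) with hS
  have hSnn : 0 ≤ S := Real.sqrt_nonneg _
  have hAbound : |A| ≤ S * Real.sqrt pinf := aux_cs Ψ g hg hΨL2 h0g hg1
  have hdiff : B - A = ∫ ω, Ψ ω * (f ω - g ω) := by
    rw [hB, hA, ← integral_sub hΨf hΨg]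
    congr 1; ext ω; ring
  have hBA : |B - A| ≤ S * Real.sqrt (pK - pinf) := by
    rw [hdiff]
    have := aux_cs Ψ (fun ω => f ω - g ω) (hf.sub hg) hΨL2
      (fun ω => by linarith [hgf ω])
      (fun ω => by linarith [hf1 ω, h0g ω])
    have hint : (∫ ω, (f ω - g ω)) = pK - pinf := integral_sub hfint hgint
    rwa [hint] at this
  have hdecomp : A / pinf - B / pK = A * (pK - pinf) / (pinf * pK) + (A - B) / pK := by
    field_simp
    ring
  rw [hdecomp]
  have hsqrtpinf : 0 < Real.sqrt pinf := Real.sqrt_pos.mpr hpinf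
  have hs : Real.sqrt pinf * Real.sqrt pinf = pinf := Real.mul_self_sqrt hpinf.le
  have term1 : |A * (pK - pinf) / (pinf * pK)| ≤ S * ((pK - pinf) / (pK * Real.sqrt pinf)) := by
    rw [abs_div, abs_mul, abs_of_nonneg (by linarith : (0:ℝ) ≤ pK - pinf),
      abs_of_pos (mul_pos hpinf hpKpos)]
    have hrhs : S * ((pK - pinf) / (pK * Real.sqrt pinf))
        = (S * Real.sqrt pinf) * (pK - pinf) / (pinf * pK) := by
      have hs2 : Real.sqrt pinf ^ 2 = pinf := Real.sq_sqrt hpinf.le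
      field_simp
      linear_combination (S*pinf - S*pK) * hs2
    rw [hrhs]
    gcongr
    all_goals first | linarith | exact hAbound
  have term2 : |(A - B) / pK| ≤ S * (Real.sqrt (pK - pinf) / pK) := by
    rw [abs_div, abs_of_pos hpKpos, abs_sub_comm,
      show S * (Real.sqrt (pK - pinf) / pK) = (S * Real.sqrt (pK - pinf)) / pK by ring]
    gcongr
    all_goals first | linarith | exact hBA
  calc |A * (pK - pinf) / (pinf * pK) + (A - B) / pK|
      ≤ |A * (pK - pinf) / (pinf * pK)| + |(A - B) / pK| := abs_add_le _ _
    _ ≤ S * ((pK - pinf) / (pK * Real.sqrt pinf)) + S * (Real.sqrt (pK - pinf) / pK) :=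
        add_le_add term1 term2
    _ = S * ((pK - pinf) / (pK * Real.sqrt pinf) + Real.sqrt (pK - pinf) / pK) := by ring
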